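/- Let X_1, X_2, … be i.i.d. real random variables whose common logarithmic moment generating function Λ(t) = log E[exp(t X_1)] is finite for all t ∈ ℝ, and let I(x) = sup_{t ∈ ℝ} (t x − Λ(t)) be the Cramér rate function. Then for every x > E[X_1], liminf_{n → ∞} (1/n) log P(X_1 + ⋯ + X_n ≥ n x) ≥ −I(x). -/

import Mathlib

open MeasureTheory ProbabilityTheory Filter
open scoped ENNReal

/-- The Cramér rate function `I(x) = ⨆ t, (t x - Λ(t))`, as a function `ℝ → [0, ∞] ⊆ EReal`,
where `Λ = cgf X μ` is the logarithmic moment generating function `t ↦ log E[exp (t X)]`. -/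
noncomputable def cramerRate {Ω : Type*} [MeasurableSpace Ω] (X : Ω → ℝ) (μ : Measure Ω)
    (x : ℝ) : EReal :=
  ⨆ t : ℝ, ((t * x - cgf X μ t : ℝ) : EReal)

set_option linter.unusedSectionVars false
set_option linter.unusedVariables false

open scoped Topology

section AuxCramer


lemma aux_le_of_forall_sub {a : ℝ} {L : EReal} (h : ∀ ε : ℝ, 0 < ε → ((a - ε : ℝ) : EReal) ≤ L) :
    (a : EReal) ≤ L := by
  by_contra h'
  push_neg at h'
  induction L with
  | bot => exact EReal.coe_ne_bot _ ((le_bot_iff.1 (h 1 one_pos)))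
  | coe l =>
      have hla : l < a := by exact_mod_cast h'
      have := h ((a - l)/2) (by linarith)
      rw [EReal.coe_le_coe_iff] at this
      linarith
  | top => exact absurd h' (not_lt.2 le_top)

lemma aux_pow_abs_le {k : ℕ} (hk : k ≤ 2) (y : ℝ) : |y| ^ k ≤ 4 * Real.exp |y| := by
  have h1 : (1:ℝ) ≤ Real.exp |y| := Real.one_le_exp (abs_nonneg y)
  have h2 : |y| + 1 ≤ Real.exp |y| := Real.add_one_le_exp _
  interval_cases k
  · simpa using by linarith
  · simp only [pow_one]; linarith
  · have h3 : |y|/2 + 1 ≤ Real.exp (|y|/2) := Real.add_one_le_exp _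
    have h4 : Real.exp |y| = Real.exp (|y|/2) * Real.exp (|y|/2) := by
      rw [← Real.exp_add]; ring_nf
    have h5 : (0:ℝ) ≤ |y|/2 := by positivity
    nlinarith [abs_nonneg y]

lemma aux_abs_pow_mul_exp_le {t s : ℝ} (hs : |s - t| ≤ 1) {k : ℕ} (hk : k ≤ 2) (y : ℝ) :
    |y| ^ k * Real.exp (s * y) ≤ 4 * (Real.exp ((t+2) * y) + Real.exp ((t-2) * y)) := by
  have h0 : |y| ^ k * Real.exp (s * y) ≤ 4 * Real.exp (|y| + s * y) := by
    rw [Real.exp_add, ← mul_assoc]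
    exact mul_le_mul_of_nonneg_right (aux_pow_abs_le hk y) (Real.exp_pos _).le
  refine h0.trans ?_
  rw [abs_le] at hs
  rcases le_or_gt 0 y with hy | hy
  · have : |y| + s * y ≤ (t+2) * y := by rw [abs_of_nonneg hy]; nlinarith
    have := Real.exp_le_exp.2 this
    nlinarith [Real.exp_pos ((t-2)*y)]
  · have : |y| + s * y ≤ (t-2) * y := by rw [abs_of_neg hy]; nlinarith
    have := Real.exp_le_exp.2 this
    nlinarith [Real.exp_pos ((t+2)*y)]

lemma aux_exists_pos_lt {f : ℝ → ℝ} {d : ℝ} (hf : HasDerivAt f d 0) (hd : d < 0) :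
    ∃ θ : ℝ, 0 < θ ∧ f θ < f 0 := by
  have hslope : Tendsto (slope f 0) (𝓝[≠] (0:ℝ)) (𝓝 d) :=
    hasDerivAt_iff_tendsto_slope.1 hf
  have h1 : ∀ᶠ u in 𝓝[≠] (0:ℝ), slope f 0 u < 0 :=
    hslope.eventually_lt_const hd
  have h2 : ∀ᶠ u in 𝓝[>] (0:ℝ), slope f 0 u < 0 :=
    h1.filter_mono (nhdsWithin_mono 0 fun u hu => ne_of_gt hu)
  have h3 : ∀ᶠ u in 𝓝[>] (0:ℝ), 0 < u := self_mem_nhdsWithin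
  obtain ⟨θ, hθ1, hθ2⟩ := (h2.and h3).exists
  refine ⟨θ, hθ2, ?_⟩
  have : (f θ - f 0) / θ < 0 := by simpa [slope_def_field, div_eq_iff] using hθ1
  have := (div_neg_iff.1 this)
  rcases this with ⟨h, h'⟩ | ⟨h, h'⟩
  · linarith
  · linarith

variable {Ω : Type*} [MeasurableSpace Ω] {μ : Measure Ω} [IsProbabilityMeasure μ]


lemma aux_int_pow {Y : Ω → ℝ} (hY : Measurable Y)
    (hfin : ∀ t : ℝ, Integrable (fun ω => Real.exp (t * Y ω)) μ)
    {k : ℕ} (hk : k ≤ 2) (t : ℝ) :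
    Integrable (fun ω => Y ω ^ k * Real.exp (t * Y ω)) μ := by
  refine Integrable.mono' (((hfin (t+2)).add (hfin (t-2))).const_mul 4)
    (((hY.pow_const k).mul ((hY.const_mul t).exp)).aestronglyMeasurable) ?_
  filter_upwards with ω
  rw [norm_mul, Real.norm_eq_abs, Real.norm_eq_abs, Real.abs_exp, abs_pow]
  exact aux_abs_pow_mul_exp_le (by simp) hk (Y ω)

lemma aux_hasDerivAt {Y : Ω → ℝ} (hY : Measurable Y)
    (hfin : ∀ t : ℝ, Integrable (fun ω => Real.exp (t * Y ω)) μ)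
    {k : ℕ} (hk : k ≤ 1) (t₀ : ℝ) :
    HasDerivAt (fun s => ∫ ω, Y ω ^ k * Real.exp (s * Y ω) ∂μ)
      (∫ ω, Y ω ^ (k+1) * Real.exp (t₀ * Y ω) ∂μ) t₀ := by
  have hmeas : ∀ (j : ℕ) (s : ℝ),
      AEStronglyMeasurable (fun ω => Y ω ^ j * Real.exp (s * Y ω)) μ := fun j s =>
    ((hY.pow_const j).mul ((hY.const_mul s).exp)).aestronglyMeasurable
  refine (hasDerivAt_integral_of_dominated_loc_of_deriv_le (F := fun s ω => Y ω ^ k * Real.exp (s * Y ω))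
    (F' := fun s ω => Y ω ^ (k+1) * Real.exp (s * Y ω))
    (bound := fun ω => 4 * (Real.exp ((t₀+2) * Y ω) + Real.exp ((t₀-2) * Y ω)))
    (Metric.ball_mem_nhds t₀ one_pos) (Eventually.of_forall fun s => hmeas k s)
    (aux_int_pow hY hfin (hk.trans one_le_two) t₀) (hmeas (k+1) t₀) ?_
    (((hfin (t₀+2)).add (hfin (t₀-2))).const_mul 4) ?_).2
  · filter_upwards with ω s hs
    rw [norm_mul, Real.norm_eq_abs, Real.norm_eq_abs, Real.abs_exp, abs_pow]
    refine aux_abs_pow_mul_exp_le ?_ (by omega) (Y ω)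
    rw [Metric.mem_ball, Real.dist_eq] at hs
    exact hs.le
  · filter_upwards with ω s _
    have h1 : HasDerivAt (fun s : ℝ => Real.exp (s * Y ω)) (Y ω * Real.exp (s * Y ω)) s := by
      have := ((hasDerivAt_id s).mul_const (Y ω)).exp
      simpa [mul_comm] using this
    have := h1.const_mul (Y ω ^ k)
    exact this.congr_deriv (by ring)

lemma aux_key (hmeas : ∀ i, Measurable (X i))
    (hindep : iIndepFun X μ)
    (hident : ∀ i, IdentDistrib (X i) (X 0) μ μ)
    (hfin : ∀ t : ℝ, Integrable (fun ω => Real.exp (t * X 0 ω)) μ)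
    {t θ θ' : ℝ} (x z : ℝ) (ht : 0 ≤ t) (hθ : 0 < θ) (hθ' : 0 < θ') (hxz : x ≤ z) (n : ℕ) :
    mgf (X 0) μ t ^ n - Real.exp (θ' * (n * x)) * mgf (X 0) μ (t - θ') ^ n
        - Real.exp (-θ * (n * z)) * mgf (X 0) μ (t + θ) ^ n
      ≤ Real.exp (t * (n * z)) *
        (μ {ω | (n : ℝ) * x ≤ ∑ i ∈ Finset.range n, X i ω}).toReal := by
  classical
  set S : Ω → ℝ := (∑ i ∈ Finset.range n, X i) with hS_def
  have hSapp : ∀ ω, S ω = ∑ i ∈ Finset.range n, X i ω := fun ω => by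
    simp [hS_def]
  have hSmeas : Measurable S := by
    have : Measurable fun ω => ∑ i ∈ Finset.range n, X i ω :=
      Finset.measurable_sum _ fun i _ => hmeas i
    simpa [funext hSapp] using this
  -- integrability of exp (s * S)
  have hfinX : ∀ (i : ℕ) (s : ℝ), Integrable (fun ω => Real.exp (s * X i ω)) μ := by
    intro i s
    have hid : IdentDistrib (fun ω => Real.exp (s * X i ω)) (fun ω => Real.exp (s * X 0 ω)) μ μ :=
      (hident i).comp (Real.measurable_exp.comp (measurable_const_mul s))
    exact hid.integrable_iff.2 (hfin s)
  have hintS : ∀ s : ℝ, Integrable (fun ω => Real.exp (s * S ω)) μ := fun s =>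
    hindep.integrable_exp_mul_sum hmeas fun i _ => hfinX i s
  have hMS : ∀ s : ℝ, ∫ ω, Real.exp (s * S ω) ∂μ = mgf (X 0) μ s ^ n := by
    intro s
    have h1 : mgf S μ s = ∏ i ∈ Finset.range n, mgf (X i) μ s :=
      hindep.mgf_sum hmeas _
    have h2 : ∀ i, mgf (X i) μ s = mgf (X 0) μ s := fun i =>
      ((hident i).comp (Real.measurable_exp.comp (measurable_const_mul s))).integral_eq
    have : mgf S μ s = mgf (X 0) μ s ^ n := by
      rw [h1, Finset.prod_congr rfl fun i _ => h2 i, Finset.prod_const, Finset.card_range]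
    exact this
  set A : Set Ω := {ω | (n : ℝ) * x ≤ S ω ∧ S ω ≤ (n : ℝ) * z} with hA_def
  set B : Set Ω := {ω | (n : ℝ) * x ≤ S ω} with hB_def
  have hAmeas : MeasurableSet A :=
    (measurableSet_le measurable_const hSmeas).inter (measurableSet_le hSmeas measurable_const)
  have hBmeas : MeasurableSet B := measurableSet_le measurable_const hSmeas
  set C : Set Ω := {ω | S ω < (n : ℝ) * x} with hC_def
  set D : Set Ω := {ω | (n : ℝ) * z < S ω} with hD_def
  have hCmeas : MeasurableSet C := measurableSet_lt hSmeas measurable_const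
  have hDmeas : MeasurableSet D := measurableSet_lt measurable_const hSmeas
  have hcompl : Aᶜ = C ∪ D := by
    ext ω
    simp only [hA_def, hC_def, hD_def, Set.mem_compl_iff, Set.mem_setOf_eq, Set.mem_union,
      not_and_or, not_le]
  have hCD : Disjoint C D := by
    rw [Set.disjoint_left]
    intro ω hω1 hω2
    simp only [hC_def, hD_def, Set.mem_setOf_eq] at hω1 hω2
    have hnxz : (n : ℝ) * x ≤ (n : ℝ) * z :=
      mul_le_mul_of_nonneg_left hxz (Nat.cast_nonneg n)
    linarith
  -- bound on C
  have hC_bound : ∫ ω in C, Real.exp (t * S ω) ∂μ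
      ≤ Real.exp (θ' * (n * x)) * mgf (X 0) μ (t - θ') ^ n := by
    have hg : Integrable (fun ω => Real.exp (θ' * (n * x)) * Real.exp ((t - θ') * S ω)) μ :=
      (hintS (t - θ')).const_mul _
    have step1 : ∫ ω in C, Real.exp (t * S ω) ∂μ
        ≤ ∫ ω in C, Real.exp (θ' * (n * x)) * Real.exp ((t - θ') * S ω) ∂μ := by
      refine setIntegral_mono_on (hintS t).integrableOn hg.integrableOn hCmeas ?_
      intro ω hω
      rw [← Real.exp_add]
      apply Real.exp_le_exp.2
      have : S ω ≤ (n : ℝ) * x := le_of_lt hω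
      nlinarith
    have step2 : ∫ ω in C, Real.exp (θ' * (n * x)) * Real.exp ((t - θ') * S ω) ∂μ
        ≤ ∫ ω, Real.exp (θ' * (n * x)) * Real.exp ((t - θ') * S ω) ∂μ := by
      refine setIntegral_le_integral hg (Eventually.of_forall fun ω => ?_)
      positivity
    calc _ ≤ _ := step1
      _ ≤ _ := step2
      _ = Real.exp (θ' * (n * x)) * mgf (X 0) μ (t - θ') ^ n := by
          rw [integral_const_mul, hMS]
  have hD_bound : ∫ ω in D, Real.exp (t * S ω) ∂μ
      ≤ Real.exp (-θ * (n * z)) * mgf (X 0) μ (t + θ) ^ n := by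
    have hg : Integrable (fun ω => Real.exp (-θ * (n * z)) * Real.exp ((t + θ) * S ω)) μ :=
      (hintS (t + θ)).const_mul _
    have step1 : ∫ ω in D, Real.exp (t * S ω) ∂μ
        ≤ ∫ ω in D, Real.exp (-θ * (n * z)) * Real.exp ((t + θ) * S ω) ∂μ := by
      refine setIntegral_mono_on (hintS t).integrableOn hg.integrableOn hDmeas ?_
      intro ω hω
      rw [← Real.exp_add]
      apply Real.exp_le_exp.2
      have : (n : ℝ) * z ≤ S ω := le_of_lt hω
      nlinarith
    have step2 : ∫ ω in D, Real.exp (-θ * (n * z)) * Real.exp ((t + θ) * S ω) ∂μ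
        ≤ ∫ ω, Real.exp (-θ * (n * z)) * Real.exp ((t + θ) * S ω) ∂μ := by
      refine setIntegral_le_integral hg (Eventually.of_forall fun ω => ?_)
      positivity
    calc _ ≤ _ := step1
      _ ≤ _ := step2
      _ = _ := by rw [integral_const_mul, hMS]
  -- bound on A
  have hA_bound : ∫ ω in A, Real.exp (t * S ω) ∂μ ≤ Real.exp (t * (n * z)) * (μ B).toReal := by
    have step1 : ∫ ω in A, Real.exp (t * S ω) ∂μ
        ≤ ∫ _ω in A, Real.exp (t * (n * z)) ∂μ := by
      refine setIntegral_mono_on (hintS t).integrableOn (integrableOn_const ?_) hAmeas ?_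
      · exact measure_ne_top μ A
      · intro ω hω
        apply Real.exp_le_exp.2
        have : S ω ≤ (n : ℝ) * z := hω.2
        nlinarith
    have step2 : ∫ _ω in A, Real.exp (t * (n * z)) ∂μ = (μ A).toReal * Real.exp (t * (n * z)) := by
      rw [setIntegral_const, smul_eq_mul, measureReal_def]
    have step3 : (μ A).toReal ≤ (μ B).toReal :=
      ENNReal.toReal_mono (measure_ne_top μ B) (measure_mono fun ω hω => hω.1)
    calc _ ≤ _ := step1
      _ = (μ A).toReal * Real.exp (t * (n * z)) := step2
      _ ≤ (μ B).toReal * Real.exp (t * (n * z)) :=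
          mul_le_mul_of_nonneg_right step3 (Real.exp_pos _).le
      _ = _ := mul_comm _ _
  -- combine
  have hsplit : ∫ ω in A, Real.exp (t * S ω) ∂μ + ∫ ω in Aᶜ, Real.exp (t * S ω) ∂μ
      = mgf (X 0) μ t ^ n := by
    rw [integral_add_compl hAmeas (hintS t), hMS]
  have hAc : ∫ ω in Aᶜ, Real.exp (t * S ω) ∂μ
      ≤ Real.exp (θ' * (n * x)) * mgf (X 0) μ (t - θ') ^ n
        + Real.exp (-θ * (n * z)) * mgf (X 0) μ (t + θ) ^ n := by
    rw [hcompl, setIntegral_union hCD hDmeas (hintS t).integrableOn (hintS t).integrableOn]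
    exact add_le_add hC_bound hD_bound
  have hBeq : {ω | (n : ℝ) * x ≤ ∑ i ∈ Finset.range n, X i ω} = B := by
    ext ω; simp [hB_def, hSapp]
  rw [hBeq]
  linarith

lemma aux_liminf_core (hmeas : ∀ i, Measurable (X i))
    (hindep : iIndepFun X μ)
    (hident : ∀ i, IdentDistrib (X i) (X 0) μ μ)
    (hfin : ∀ t : ℝ, Integrable (fun ω => Real.exp (t * X 0 ω)) μ)
    {t c x z : ℝ} (ht : 0 ≤ t) (hxc : x < c) (hcz : c < z)
    (hder : HasDerivAt (fun s => cgf (X 0) μ s) c t) :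
    ((cgf (X 0) μ t - t * z : ℝ) : EReal) ≤
      liminf (fun n : ℕ =>
        (((n : ℝ)⁻¹ : ℝ) : EReal) *
          ENNReal.log (μ {ω | (n : ℝ) * x ≤ ∑ i ∈ Finset.range n, X i ω})) atTop := by
  set Λ : ℝ → ℝ := fun s => cgf (X 0) μ s with hΛ
  have hexpΛ : ∀ s, Real.exp (Λ s) = mgf (X 0) μ s := fun s =>
    Real.exp_log (mgf_pos (hfin s))
  -- choose θ
  have hφ : HasDerivAt (fun u : ℝ => Λ (t + u) - u * z) (c - z) 0 := by
    have hadd : HasDerivAt (fun u : ℝ => t + u) 1 0 := by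
      simpa using (hasDerivAt_id (0:ℝ)).const_add t
    have hder0 : HasDerivAt Λ c ((fun u : ℝ => t + u) 0) := by simpa using hder
    have h1 : HasDerivAt (fun u : ℝ => Λ (t + u)) (c * 1) 0 := hder0.comp 0 hadd
    exact (h1.sub (hasDerivAt_mul_const z)).congr_deriv (by ring)
  obtain ⟨θ, hθpos, hθlt⟩ := aux_exists_pos_lt hφ (by linarith)
  simp only [add_zero, zero_mul, sub_zero] at hθlt
  -- choose θ'
  have hψ : HasDerivAt (fun u : ℝ => Λ (t - u) + u * x) (x - c) 0 := by
    have hsub : HasDerivAt (fun u : ℝ => t - u) (-1) 0 := by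
      exact (hasDerivAt_id' (0:ℝ)).const_sub t
    have hder0 : HasDerivAt Λ c ((fun u : ℝ => t - u) 0) := by simpa using hder
    have h1 : HasDerivAt (fun u : ℝ => Λ (t - u)) (c * (-1)) 0 := hder0.comp 0 hsub
    have := h1.add (hasDerivAt_mul_const x)
    exact this.congr_deriv (by ring)
  obtain ⟨θ', hθ'pos, hθ'lt⟩ := aux_exists_pos_lt hψ (by linarith)
  simp only [sub_zero, zero_mul, add_zero] at hθ'lt
  set rp : ℝ := Real.exp (Λ (t + θ) - θ * z - Λ t) with hrp
  set rm : ℝ := Real.exp (Λ (t - θ') + θ' * x - Λ t) with hrm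
  have hrp1 : rp < 1 := Real.exp_lt_one_iff.2 (by linarith)
  have hrm1 : rm < 1 := Real.exp_lt_one_iff.2 (by linarith)
  have hrppos : 0 < rp := Real.exp_pos _
  have hrmpos : 0 < rm := Real.exp_pos _
  -- per n lower bound
  have hkey : ∀ n : ℕ,
      Real.exp (n * Λ t) * (1 - rm ^ n - rp ^ n)
        ≤ Real.exp (t * (n * z)) *
          (μ {ω | (n : ℝ) * x ≤ ∑ i ∈ Finset.range n, X i ω}).toReal := by
    intro n
    have h := aux_key hmeas hindep hident hfin x z ht hθpos hθ'pos (by linarith) n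
    have e1 : mgf (X 0) μ t ^ n = Real.exp (n * Λ t) := by
      rw [← hexpΛ, ← Real.exp_nat_mul]
    have e2 : Real.exp (θ' * (n * x)) * mgf (X 0) μ (t - θ') ^ n
        = Real.exp (n * Λ t) * rm ^ n := by
      rw [← hexpΛ, ← Real.exp_nat_mul, hrm, ← Real.exp_nat_mul, ← Real.exp_add, ← Real.exp_add]
      ring_nf
    have e3 : Real.exp (-θ * (n * z)) * mgf (X 0) μ (t + θ) ^ n
        = Real.exp (n * Λ t) * rp ^ n := by
      rw [← hexpΛ, ← Real.exp_nat_mul, hrp, ← Real.exp_nat_mul, ← Real.exp_add, ← Real.exp_add]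
      ring_nf
    rw [e1, e2, e3] at h
    calc Real.exp (n * Λ t) * (1 - rm ^ n - rp ^ n)
        = Real.exp (n * Λ t) - Real.exp (n * Λ t) * rm ^ n
          - Real.exp (n * Λ t) * rp ^ n := by ring
      _ ≤ _ := h
  -- eventual positivity
  have htends : Tendsto (fun n : ℕ => rm ^ n + rp ^ n) atTop (𝓝 0) := by
    have h1 := tendsto_pow_atTop_nhds_zero_of_lt_one hrmpos.le hrm1
    have h2 := tendsto_pow_atTop_nhds_zero_of_lt_one hrppos.le hrp1
    simpa using h1.add h2
  have hev : ∀ᶠ n : ℕ in atTop, rm ^ n + rp ^ n < 1/2 :=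
    htends.eventually_lt_const (by norm_num)
  refine aux_le_of_forall_sub fun ε hε => ?_
  have hev2 : ∀ᶠ n : ℕ in atTop, (n : ℝ)⁻¹ * |Real.log (1/2)| < ε := by
    have : Tendsto (fun n : ℕ => (n : ℝ)⁻¹ * |Real.log (1/2)|) atTop (𝓝 0) := by
      simpa using (tendsto_inv_atTop_nhds_zero_nat.mul_const |Real.log (1/2)|)
    exact this.eventually_lt_const hε
  refine le_liminf_of_le (by isBoundedDefault) ?_
  filter_upwards [hev, hev2, eventually_ge_atTop 1] with n hn hn2 hn1
  set P := μ {ω | (n : ℝ) * x ≤ ∑ i ∈ Finset.range n, X i ω} with hP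
  have hnR : (1:ℝ) ≤ (n:ℝ) := by exact_mod_cast hn1
  have hlow : (1/2) * Real.exp ((n : ℝ) * (Λ t - t * z)) ≤ P.toReal := by
    have h1 := hkey n
    have h2 : (1:ℝ) - rm ^ n - rp ^ n ≥ 1/2 := by linarith
    have h3 : Real.exp ((n:ℝ) * Λ t) * (1/2) ≤ Real.exp ((n:ℝ) * Λ t) * (1 - rm ^ n - rp ^ n) :=
      mul_le_mul_of_nonneg_left (by linarith) (Real.exp_pos _).le
    have h4 : Real.exp ((n:ℝ) * Λ t) * (1/2) ≤ Real.exp (t * (n * z)) * P.toReal := le_trans h3 h1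
    have h5 : 0 < Real.exp (t * ((n:ℝ) * z)) := Real.exp_pos _
    have hid : Real.exp ((n:ℝ) * (Λ t - t * z)) * Real.exp (t * ((n:ℝ) * z))
        = Real.exp ((n:ℝ) * Λ t) := by
      rw [← Real.exp_add]; ring_nf
    rw [← mul_le_mul_iff_of_pos_right h5]
    calc (1/2) * Real.exp ((n:ℝ) * (Λ t - t * z)) * Real.exp (t * ((n:ℝ) * z))
        = Real.exp ((n:ℝ) * Λ t) * (1/2) := by rw [mul_assoc, hid]; ring
      _ ≤ Real.exp (t * ((n:ℝ) * z)) * P.toReal := h4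
      _ = P.toReal * Real.exp (t * ((n:ℝ) * z)) := mul_comm _ _
  have hPt : P ≠ ⊤ := measure_ne_top μ _
  have hlog : ((Real.log (1/2) + (n : ℝ) * (Λ t - t * z) : ℝ) : EReal) ≤ ENNReal.log P := by
    have h6 : ENNReal.ofReal ((1/2) * Real.exp ((n : ℝ) * (Λ t - t * z))) ≤ P :=
      ENNReal.ofReal_le_of_le_toReal hlow
    have h7 := ENNReal.log_monotone h6
    rwa [ENNReal.log_ofReal_of_pos (by positivity), Real.log_mul (by norm_num)
      (Real.exp_ne_zero _), Real.log_exp] at h7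
  have hmul : (((n : ℝ)⁻¹ : ℝ) : EReal) * ((Real.log (1/2) + (n : ℝ) * (Λ t - t * z) : ℝ) : EReal)
      ≤ (((n : ℝ)⁻¹ : ℝ) : EReal) * ENNReal.log P :=
    mul_le_mul_of_nonneg_left hlog (by exact_mod_cast inv_nonneg.2 (by linarith : (0:ℝ) ≤ n))
  refine le_trans ?_ hmul
  rw [← EReal.coe_mul, EReal.coe_le_coe_iff]
  have hne : (n:ℝ) ≠ 0 := by linarith
  have : (n : ℝ)⁻¹ * (Real.log (1/2) + (n:ℝ) * (Λ t - t * z))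
      = (n:ℝ)⁻¹ * Real.log (1/2) + (Λ t - t * z) := by
    field_simp
  rw [this]
  have : -((n:ℝ)⁻¹ * |Real.log (1/2)|) ≤ (n:ℝ)⁻¹ * Real.log (1/2) := by
    have h1 : -|Real.log (1/2)| ≤ Real.log (1/2) := neg_abs_le _
    have h2 : (0:ℝ) ≤ (n:ℝ)⁻¹ := inv_nonneg.2 (by linarith)
    nlinarith
  linarith

lemma aux_hasDerivAt_mgf {Y : Ω → ℝ} (hY : Measurable Y)
    (hfin : ∀ t : ℝ, Integrable (fun ω => Real.exp (t * Y ω)) μ) (t₀ : ℝ) :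
    HasDerivAt (fun s => mgf Y μ s) (∫ ω, Y ω * Real.exp (t₀ * Y ω) ∂μ) t₀ := by
  have h0 := aux_hasDerivAt hY hfin (k := 0) (by norm_num) t₀
  simp only [pow_zero, one_mul, zero_add, pow_one] at h0
  exact h0

lemma aux_hasDerivAt_cgf {Y : Ω → ℝ} (hY : Measurable Y)
    (hfin : ∀ t : ℝ, Integrable (fun ω => Real.exp (t * Y ω)) μ) (t₀ : ℝ) :
    HasDerivAt (fun s => cgf Y μ s)
      ((∫ ω, Y ω * Real.exp (t₀ * Y ω) ∂μ) / mgf Y μ t₀) t₀ :=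
  (aux_hasDerivAt_mgf hY hfin t₀).log (mgf_pos (hfin t₀)).ne'

lemma aux_cont_a1 {Y : Ω → ℝ} (hY : Measurable Y)
    (hfin : ∀ t : ℝ, Integrable (fun ω => Real.exp (t * Y ω)) μ) :
    Continuous (fun s => ∫ ω, Y ω * Real.exp (s * Y ω) ∂μ) := by
  rw [continuous_iff_continuousAt]
  intro t₀
  have h := aux_hasDerivAt hY hfin (k := 1) le_rfl t₀
  simp only [pow_one] at h
  exact h.continuousAt

lemma aux_a1_zero {Y : Ω → ℝ} (hY : Measurable Y)
    (hfin : ∀ t : ℝ, Integrable (fun ω => Real.exp (t * Y ω)) μ) :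
    ∫ ω, Y ω * Real.exp ((0:ℝ) * Y ω) ∂μ = μ[Y] := by
  simp

lemma aux_exists_tilt {Y : Ω → ℝ} (hY : Measurable Y)
    (hfin : ∀ t : ℝ, Integrable (fun ω => Real.exp (t * Y ω)) μ)
    {x y : ℝ} (hxy : x < y) (hp : 0 < (μ {ω | y ≤ Y ω}).toReal) :
    ∃ T : ℝ, 0 ≤ T ∧ x * mgf Y μ T < ∫ ω, Y ω * Real.exp (T * Y ω) ∂μ := by
  have hYint : Integrable Y μ := by
    have := aux_int_pow hY hfin (k := 1) one_le_two 0
    simpa using this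
  set K : ℝ := ∫ ω, |Y ω - x| ∂μ with hK
  have hKnonneg : 0 ≤ K := integral_nonneg fun ω => abs_nonneg _
  set p : ℝ := (μ {ω | y ≤ Y ω}).toReal with hp'
  -- choose T
  have htends : Tendsto (fun T : ℝ => (y - x) * p * Real.exp (T * (y - x))) atTop atTop := by
    refine Tendsto.const_mul_atTop (mul_pos (by linarith) hp) ?_
    exact Real.tendsto_exp_atTop.comp (tendsto_id.atTop_mul_const (by linarith))
  obtain ⟨T, hT⟩ := ((htends.eventually_gt_atTop K).and (eventually_ge_atTop (0:ℝ))).exists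
  obtain ⟨hTK, hT0⟩ := hT
  refine ⟨T, hT0, ?_⟩
  set E : Set Ω := {ω | y ≤ Y ω} with hE
  have hEmeas : MeasurableSet E := measurableSet_le measurable_const hY
  have hint : Integrable (fun ω => (Y ω - x) * Real.exp (T * Y ω)) μ := by
    have h1 := aux_int_pow hY hfin (k := 1) one_le_two T
    simp only [pow_one] at h1
    have := h1.sub ((hfin T).const_mul x)
    refine this.congr (Eventually.of_forall fun ω => by simp only [Pi.sub_apply]; ring)
  have hE_bound : (y - x) * Real.exp (T * y) * p ≤ ∫ ω in E, (Y ω - x) * Real.exp (T * Y ω) ∂μ := by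
    have step : ∫ _ω in E, (y - x) * Real.exp (T * y) ∂μ
        ≤ ∫ ω in E, (Y ω - x) * Real.exp (T * Y ω) ∂μ := by
      refine setIntegral_mono_on (integrableOn_const (measure_ne_top μ E))
        hint.integrableOn hEmeas ?_
      intro ω hω
      have h1 : y ≤ Y ω := hω
      have h2 : Real.exp (T * y) ≤ Real.exp (T * Y ω) :=
        Real.exp_le_exp.2 (mul_le_mul_of_nonneg_left h1 hT0)
      nlinarith [Real.exp_pos (T * y)]
    calc (y - x) * Real.exp (T * y) * p
        = ∫ _ω in E, (y - x) * Real.exp (T * y) ∂μ := by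
          rw [setIntegral_const, smul_eq_mul, measureReal_def]; ring
      _ ≤ _ := step
  have hEc_bound : -(Real.exp (T * x) * K) ≤ ∫ ω in Eᶜ, (Y ω - x) * Real.exp (T * Y ω) ∂μ := by
    have hg : Integrable (fun ω => -(|Y ω - x| * Real.exp (T * x))) μ :=
      (((hYint.sub (integrable_const x)).abs.mul_const _).neg)
    have step : ∫ ω in Eᶜ, -(|Y ω - x| * Real.exp (T * x)) ∂μ
        ≤ ∫ ω in Eᶜ, (Y ω - x) * Real.exp (T * Y ω) ∂μ := by
      refine setIntegral_mono_on hg.integrableOn hint.integrableOn hEmeas.compl ?_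
      intro ω _
      rcases le_or_gt x (Y ω) with h | h
      · have : 0 ≤ (Y ω - x) * Real.exp (T * Y ω) :=
          mul_nonneg (by linarith) (Real.exp_pos _).le
        nlinarith [abs_nonneg (Y ω - x), Real.exp_pos (T * x)]
      · have habs : |Y ω - x| = x - Y ω := by rw [abs_of_neg (by linarith)]; ring
        have hexp : Real.exp (T * Y ω) ≤ Real.exp (T * x) :=
          Real.exp_le_exp.2 (mul_le_mul_of_nonneg_left h.le hT0)
        rw [habs]
        nlinarith [Real.exp_pos (T * Y ω)]
    refine le_trans ?_ step
    have h1 : ∫ ω in Eᶜ, -(|Y ω - x| * Real.exp (T * x)) ∂μ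
        = -((∫ ω in Eᶜ, |Y ω - x| ∂μ) * Real.exp (T * x)) := by
      rw [integral_neg, integral_mul_const]
    rw [h1, neg_le_neg_iff, mul_comm _ (Real.exp (T * x))]
    refine mul_le_mul_of_nonneg_left ?_ (Real.exp_pos _).le
    exact setIntegral_le_integral (hYint.sub (integrable_const x)).abs
      (Eventually.of_forall fun ω => abs_nonneg _)
  have hsplit : ∫ ω in E, (Y ω - x) * Real.exp (T * Y ω) ∂μ
      + ∫ ω in Eᶜ, (Y ω - x) * Real.exp (T * Y ω) ∂μ
      = ∫ ω, (Y ω - x) * Real.exp (T * Y ω) ∂μ := integral_add_compl hEmeas hint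
  have htot : 0 < ∫ ω, (Y ω - x) * Real.exp (T * Y ω) ∂μ := by
    have hfac : (y - x) * Real.exp (T * y) * p - Real.exp (T * x) * K
        = Real.exp (T * x) * ((y - x) * p * Real.exp (T * (y - x)) - K) := by
      have : Real.exp (T * y) = Real.exp (T * x) * Real.exp (T * (y - x)) := by
        rw [← Real.exp_add]; ring_nf
      rw [this]; ring
    have : 0 < (y - x) * Real.exp (T * y) * p - Real.exp (T * x) * K := by
      rw [hfac]
      have : 0 < (y - x) * p * Real.exp (T * (y - x)) - K := by linarith
      positivity
    linarith
  have hexpand : ∫ ω, (Y ω - x) * Real.exp (T * Y ω) ∂μ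
      = (∫ ω, Y ω * Real.exp (T * Y ω) ∂μ) - x * mgf Y μ T := by
    have h1 := aux_int_pow hY hfin (k := 1) one_le_two T
    simp only [pow_one] at h1
    rw [show (fun ω => (Y ω - x) * Real.exp (T * Y ω))
        = fun ω => Y ω * Real.exp (T * Y ω) - x * Real.exp (T * Y ω) by ext ω; ring]
    rw [integral_sub h1 ((hfin T).const_mul x), integral_const_mul]
    rfl
  rw [hexpand] at htot
  linarith

lemma aux_choose_t {Y : Ω → ℝ} (hY : Measurable Y)
    (hfin : ∀ t : ℝ, Integrable (fun ω => Real.exp (t * Y ω)) μ)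
    {x x'' y : ℝ} (hmean : μ[Y] < x) (hxx : x < x'') (hxy : x < y)
    (hp : 0 < (μ {ω | y ≤ Y ω}).toReal) :
    ∃ t c : ℝ, 0 ≤ t ∧ x < c ∧ c ≤ x'' ∧ HasDerivAt (fun s => cgf Y μ s) c t := by
  obtain ⟨T, hT0, hTlt⟩ := aux_exists_tilt hY hfin hxy hp
  set m : ℝ → ℝ := fun s => (∫ ω, Y ω * Real.exp (s * Y ω) ∂μ) / mgf Y μ s with hm
  have hMcont : Continuous (fun s => mgf Y μ s) :=
    continuous_iff_continuousAt.2 fun s => (aux_hasDerivAt_mgf hY hfin s).continuousAt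
  have hmcont : Continuous m :=
    (aux_cont_a1 hY hfin).div hMcont fun s => (mgf_pos (hfin s)).ne'
  have hm0 : m 0 < x := by
    have : m 0 = μ[Y] := by
      rw [hm]
      simp [mgf_zero]
    rwa [this]
  have hmT : x < m T := by
    rw [hm]
    exact (lt_div_iff₀ (mgf_pos (hfin T))).2 (by linarith)
  set c : ℝ := min x'' (m T) with hc
  have hc1 : x < c := lt_min hxx hmT
  have hc2 : c ≤ x'' := min_le_left _ _
  have hicc : c ∈ Set.Icc (m 0) (m T) := ⟨by linarith, min_le_right _ _⟩
  obtain ⟨t, ht_mem, htc⟩ := intermediate_value_Icc hT0 hmcont.continuousOn hicc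
  exact ⟨t, c, ht_mem.1, hc1, hc2, by rw [← htc]; exact aux_hasDerivAt_cgf hY hfin t⟩

lemma aux_tendsto_exp {Y : Ω → ℝ} (hY : Measurable Y)
    (hfin : ∀ t : ℝ, Integrable (fun ω => Real.exp (t * Y ω)) μ)
    {x : ℝ} (hq : μ {ω | x < Y ω} = 0) :
    Tendsto (fun k : ℕ => Real.exp (cgf Y μ k - k * x)) atTop
      (𝓝 ((μ {ω | x ≤ Y ω}).toReal)) := by
  have hae : ∀ᵐ ω ∂μ, Y ω ≤ x := by
    rw [ae_iff]
    convert hq using 2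
    ext ω
    simp [not_le]
  have hEmeas : MeasurableSet {ω | x ≤ Y ω} := measurableSet_le measurable_const hY
  have hval : ∀ k : ℕ, ∫ ω, Real.exp ((k : ℝ) * (Y ω - x)) ∂μ
      = Real.exp (cgf Y μ k - (k : ℝ) * x) := by
    intro k
    have h1 : ∀ ω, Real.exp ((k : ℝ) * (Y ω - x))
        = Real.exp (-((k : ℝ) * x)) * Real.exp ((k : ℝ) * Y ω) := by
      intro ω; rw [← Real.exp_add]; ring_nf
    rw [funext h1, integral_const_mul]
    have h2 : (∫ ω, Real.exp ((k : ℝ) * Y ω) ∂μ) = mgf Y μ k := rfl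
    rw [h2, ← Real.exp_log (mgf_pos (hfin k)), ← Real.exp_add]
    congr 1
    rw [cgf]
    ring
  have hlim : Tendsto (fun k : ℕ => ∫ ω, Real.exp ((k : ℝ) * (Y ω - x)) ∂μ) atTop
      (𝓝 (∫ ω, Set.indicator {ω | x ≤ Y ω} 1 ω ∂μ)) := by
    refine tendsto_integral_of_dominated_convergence (fun _ => (1:ℝ))
      (fun k => (((hY.sub_const x).const_mul _).exp).aestronglyMeasurable)
      (integrable_const 1) ?_ ?_
    · intro k
      filter_upwards [hae] with ω hω
      rw [Real.norm_eq_abs, Real.abs_exp]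
      exact Real.exp_le_one_iff.2 (mul_nonpos_of_nonneg_of_nonpos (Nat.cast_nonneg k) (by linarith))
    · filter_upwards [hae] with ω hω
      rcases eq_or_lt_of_le hω with heq | hlt
      · have h3 : (fun k : ℕ => Real.exp ((k : ℝ) * (Y ω - x))) = fun _ => 1 :=
          funext fun k => by rw [heq]; simp
        rw [h3, Set.indicator_of_mem (by simp [Set.mem_setOf_eq, heq.ge]) 1]
        exact tendsto_const_nhds
      · rw [Set.indicator_of_notMem (by simp [Set.mem_setOf_eq, not_le, hlt]) 1]
        exact Real.tendsto_exp_atBot.comp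
          (tendsto_natCast_atTop_atTop.atTop_mul_const_of_neg (by linarith))
  rw [funext hval, integral_indicator_one hEmeas] at hlim
  exact hlim

lemma aux_degenerate {X : ℕ → Ω → ℝ}
    (hmeas : ∀ i, Measurable (X i))
    (hindep : iIndepFun X μ)
    (hident : ∀ i, IdentDistrib (X i) (X 0) μ μ)
    (hfin : ∀ t : ℝ, Integrable (fun ω => Real.exp (t * X 0 ω)) μ)
    {x : ℝ} (hq : μ {ω | x < X 0 ω} = 0) :
    -(cramerRate (X 0) μ x) ≤
      liminf (fun n : ℕ =>
        (((n : ℝ)⁻¹ : ℝ) : EReal) *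
          ENNReal.log (μ {ω | (n : ℝ) * x ≤ ∑ i ∈ Finset.range n, X i ω})) atTop := by
  have htd := aux_tendsto_exp (hmeas 0) hfin hq
  by_cases hP : μ {ω | x ≤ X 0 ω} = 0
  · -- cramerRate = ⊤
    have h0 : (μ {ω | x ≤ X 0 ω}).toReal = 0 := by rw [hP]; simp
    rw [h0] at htd
    have hbot : Tendsto (fun k : ℕ => cgf (X 0) μ k - (k : ℝ) * x) atTop atBot := by
      have h1 : Tendsto (fun k : ℕ => Real.log (Real.exp (cgf (X 0) μ k - (k : ℝ) * x)))
          atTop atBot := by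
        refine Real.tendsto_log_nhdsGT_zero.comp ?_
        refine tendsto_nhdsWithin_of_tendsto_nhds_of_eventually_within _ htd ?_
        exact Eventually.of_forall fun k => Real.exp_pos _
      simpa [Real.log_exp] using h1
    have htop : Tendsto (fun k : ℕ => (k : ℝ) * x - cgf (X 0) μ k) atTop atTop := by
      have h2 : Tendsto (fun k : ℕ => -(cgf (X 0) μ k - (k : ℝ) * x)) atTop atTop :=
        tendsto_neg_atBot_atTop.comp hbot
      simpa [neg_sub] using h2
    have hsup : cramerRate (X 0) μ x = ⊤ := by
      rw [cramerRate, iSup_eq_top]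
      intro b hb
      induction b with
      | bot => exact ⟨0, bot_lt_iff_ne_bot.2 (EReal.coe_ne_bot _)⟩
      | coe r =>
          obtain ⟨k, hk⟩ := (htop.eventually_gt_atTop r).exists
          exact ⟨(k : ℝ), by exact_mod_cast hk⟩
      | top => exact absurd hb (lt_irrefl _)
    rw [hsup]
    simp
  · -- 0 < P
    set P : ℝ≥0∞ := μ {ω | x ≤ X 0 ω} with hPdef
    have hPtop : P ≠ ⊤ := measure_ne_top μ _
    set p : ℝ := P.toReal with hpdef
    have hppos : 0 < p := ENNReal.toReal_pos hP hPtop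
    have hcgf_lim : Tendsto (fun k : ℕ => (k : ℝ) * x - cgf (X 0) μ k) atTop
        (𝓝 (-Real.log p)) := by
      have h1 : Tendsto (fun k : ℕ => Real.log (Real.exp (cgf (X 0) μ k - (k : ℝ) * x)))
          atTop (𝓝 (Real.log p)) :=
        ((Real.continuousAt_log hppos.ne').tendsto).comp htd
      simp only [Real.log_exp] at h1
      simpa [neg_sub] using h1.neg
    -- lower bound on cramerRate
    have hcr : ((-Real.log p : ℝ) : EReal) ≤ cramerRate (X 0) μ x := by
      refine aux_le_of_forall_sub fun ε hε => ?_
      obtain ⟨k, hk⟩ := (hcgf_lim.eventually (eventually_gt_nhds (by linarith :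
        -Real.log p - ε < -Real.log p))).exists
      calc ((-Real.log p - ε : ℝ) : EReal) ≤ (((k:ℝ) * x - cgf (X 0) μ (k:ℝ) : ℝ) : EReal) := by
            exact_mod_cast hk.le
        _ ≤ cramerRate (X 0) μ x := le_iSup (fun t : ℝ => ((t * x - cgf (X 0) μ t : ℝ) : EReal)) _
    -- liminf lower bound by log p
    have hliminf : ((Real.log p : ℝ) : EReal) ≤
        liminf (fun n : ℕ =>
          (((n : ℝ)⁻¹ : ℝ) : EReal) *
            ENNReal.log (μ {ω | (n : ℝ) * x ≤ ∑ i ∈ Finset.range n, X i ω})) atTop := by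
      refine le_liminf_of_le (by isBoundedDefault) ?_
      filter_upwards [eventually_ge_atTop 1] with n hn1
      have hsub : (⋂ i ∈ Finset.range n, (X i)⁻¹' (Set.Ici x))
          ⊆ {ω | (n : ℝ) * x ≤ ∑ i ∈ Finset.range n, X i ω} := by
        intro ω hω
        simp only [Set.mem_iInter, Set.mem_preimage, Set.mem_Ici] at hω
        simp only [Set.mem_setOf_eq]
        calc (n : ℝ) * x = ∑ _i ∈ Finset.range n, x := by
              rw [Finset.sum_const, Finset.card_range, nsmul_eq_mul]
          _ ≤ ∑ i ∈ Finset.range n, X i ω := Finset.sum_le_sum fun i hi => hω i hi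
      have hprod : μ (⋂ i ∈ Finset.range n, (X i)⁻¹' (Set.Ici x)) = P ^ n := by
        rw [hindep.meas_biInter fun i _ => ⟨Set.Ici x, measurableSet_Ici, rfl⟩]
        have : ∀ i, μ ((X i)⁻¹' (Set.Ici x)) = P := by
          intro i
          rw [(hident i).measure_mem_eq measurableSet_Ici]
          rfl
        rw [Finset.prod_congr rfl fun i _ => this i, Finset.prod_const, Finset.card_range]
      have hmono : (P ^ n : ℝ≥0∞) ≤ μ {ω | (n : ℝ) * x ≤ ∑ i ∈ Finset.range n, X i ω} := by
        rw [← hprod]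
        exact measure_mono hsub
      have hlogP : ENNReal.log P = ((Real.log p : ℝ) : EReal) := by
        rw [ENNReal.log, if_neg hP, if_neg hPtop]
      have hlog : ((n : ℝ) * Real.log p : ℝ) ≤
          ENNReal.log (μ {ω | (n : ℝ) * x ≤ ∑ i ∈ Finset.range n, X i ω}) := by
        have h1 := ENNReal.log_monotone hmono
        rw [ENNReal.log_pow, hlogP] at h1
        refine le_trans (le_of_eq ?_) h1
        rw [← EReal.coe_coe_eq_natCast, ← EReal.coe_mul]
      have hnR : (1:ℝ) ≤ (n:ℝ) := by exact_mod_cast hn1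
      calc ((Real.log p : ℝ) : EReal)
          = (((n : ℝ)⁻¹ * ((n : ℝ) * Real.log p) : ℝ) : EReal) := by
            congr 1
            field_simp
        _ = (((n : ℝ)⁻¹ : ℝ) : EReal) * (((n : ℝ) * Real.log p : ℝ) : EReal) := EReal.coe_mul _ _
        _ ≤ _ := mul_le_mul_of_nonneg_left hlog
            (by exact_mod_cast inv_nonneg.2 (by linarith : (0:ℝ) ≤ (n:ℝ)))
    calc -(cramerRate (X 0) μ x) ≤ -((-Real.log p : ℝ) : EReal) := EReal.neg_le_neg_iff.2 hcr
      _ = ((Real.log p : ℝ) : EReal) := by rw [← EReal.coe_neg, neg_neg]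
      _ ≤ _ := hliminf

-- Λ t ≥ t * mean
lemma aux_cgf_ge_mean {Y : Ω → ℝ} (hY : Measurable Y)
    (hfin : ∀ t : ℝ, Integrable (fun ω => Real.exp (t * Y ω)) μ) (t : ℝ) :
    t * μ[Y] ≤ cgf Y μ t := by
  have hYint : Integrable Y μ := by
    have := aux_int_pow hY hfin (k := 1) one_le_two 0
    simpa using this
  have hpt : ∀ ω, Real.exp (t * μ[Y]) * (1 + (t * Y ω - t * μ[Y])) ≤ Real.exp (t * Y ω) := by
    intro ω
    have h1 : 1 + (t * Y ω - t * μ[Y]) ≤ Real.exp (t * Y ω - t * μ[Y]) := by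
      have := Real.add_one_le_exp (t * Y ω - t * μ[Y])
      linarith
    have h2 := mul_le_mul_of_nonneg_left h1 (Real.exp_pos (t * μ[Y])).le
    rwa [← Real.exp_add, add_sub_cancel] at h2
  have hint : Integrable (fun ω => Real.exp (t * μ[Y]) * (1 + (t * Y ω - t * μ[Y]))) μ := by
    refine Integrable.const_mul ?_ _
    exact (integrable_const 1).add ((hYint.const_mul t).sub (integrable_const _))
  have hle : Real.exp (t * μ[Y]) ≤ mgf Y μ t := by
    have h3 := integral_mono hint (hfin t) hpt
    have h4 : ∫ ω, Real.exp (t * μ[Y]) * (1 + (t * Y ω - t * μ[Y])) ∂μ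
        = Real.exp (t * μ[Y]) := by
      rw [integral_const_mul]
      have : ∫ ω, (1 + (t * Y ω - t * μ[Y])) ∂μ = 1 := by
        have hfun : (fun ω => 1 + (t * Y ω - t * μ[Y]))
            = fun ω => (1 - t * μ[Y]) + t * Y ω := funext fun ω => by ring
        rw [hfun, integral_add (integrable_const _) (hYint.const_mul t),
          integral_const, integral_const_mul]
        simp
      rw [this, mul_one]
    rwa [h4] at h3
  calc t * μ[Y] = Real.log (Real.exp (t * μ[Y])) := (Real.log_exp _).symm
    _ ≤ Real.log (mgf Y μ t) := Real.log_le_log (Real.exp_pos _) hle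
    _ = cgf Y μ t := rfl

lemma aux_cgf_ge_tail {Y : Ω → ℝ} (hY : Measurable Y)
    (hfin : ∀ t : ℝ, Integrable (fun ω => Real.exp (t * Y ω)) μ)
    {y t : ℝ} (ht : 0 ≤ t) (hp : 0 < (μ {ω | y ≤ Y ω}).toReal) :
    t * y + Real.log (μ {ω | y ≤ Y ω}).toReal ≤ cgf Y μ t := by
  set E : Set Ω := {ω | y ≤ Y ω} with hE
  have hEmeas : MeasurableSet E := measurableSet_le measurable_const hY
  have h1 : Real.exp (t * y) * (μ E).toReal ≤ mgf Y μ t := by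
    have step1 : ∫ _ω in E, Real.exp (t * y) ∂μ ≤ ∫ ω in E, Real.exp (t * Y ω) ∂μ := by
      refine setIntegral_mono_on (integrableOn_const (measure_ne_top μ E))
        (hfin t).integrableOn hEmeas fun ω hω => ?_
      exact Real.exp_le_exp.2 (mul_le_mul_of_nonneg_left hω ht)
    have step2 : ∫ ω in E, Real.exp (t * Y ω) ∂μ ≤ ∫ ω, Real.exp (t * Y ω) ∂μ :=
      setIntegral_le_integral (hfin t) (Eventually.of_forall fun ω => (Real.exp_pos _).le)
    have step0 : ∫ _ω in E, Real.exp (t * y) ∂μ = (μ E).toReal * Real.exp (t * y) := by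
      rw [setIntegral_const, smul_eq_mul, measureReal_def]
    calc Real.exp (t * y) * (μ E).toReal = ∫ _ω in E, Real.exp (t * y) ∂μ := by
          rw [step0]; ring
      _ ≤ _ := step1
      _ ≤ _ := step2
  calc t * y + Real.log (μ E).toReal
      = Real.log (Real.exp (t * y) * (μ E).toReal) := by
        rw [Real.log_mul (Real.exp_ne_zero _) hp.ne', Real.log_exp]
    _ ≤ Real.log (mgf Y μ t) := Real.log_le_log (by positivity) h1
    _ = cgf Y μ t := rfl

end AuxCramer

/-- Cramér lower bound for tails: if `X 0, X 1, …` are i.i.d. real random variables whose common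
logarithmic moment generating function is finite everywhere, then for every `x > E[X 0]`,
`liminf_n (1/n) log P(X 0 + ⋯ + X (n-1) ≥ n x) ≥ - I x`, where `I` is the Cramér rate function
(logarithms of probabilities are taken in `EReal` via `ENNReal.log`). -/
theorem liminf_log_measure_sum_ge {Ω : Type*} [MeasurableSpace Ω]
    (μ : Measure Ω) [IsProbabilityMeasure μ] (X : ℕ → Ω → ℝ)
    (hmeas : ∀ i, Measurable (X i))
    (hindep : iIndepFun X μ)
    (hident : ∀ i, IdentDistrib (X i) (X 0) μ μ)
    (hfin : ∀ t : ℝ, Integrable (fun ω => Real.exp (t * X 0 ω)) μ)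
    (x : ℝ) (hx : μ[X 0] < x) :
    -(cramerRate (X 0) μ x) ≤
      liminf (fun n : ℕ =>
        (((n : ℝ)⁻¹ : ℝ) : EReal) *
          ENNReal.log (μ {ω | (n : ℝ) * x ≤ ∑ i ∈ Finset.range n, X i ω})) atTop := by
  by_cases hq : μ {ω | x < X 0 ω} = 0
  · exact aux_degenerate hmeas hindep hident hfin hq
  -- nondegenerate case: find y > x with positive tail mass
  have hexists_y : ∃ y : ℝ, x < y ∧ 0 < (μ {ω | y ≤ X 0 ω}).toReal := by
    have h1 : ¬ ∀ k : ℕ, μ {ω | x + ((k : ℝ) + 1)⁻¹ ≤ X 0 ω} = 0 := by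
      intro hall
      apply hq
      refine measure_mono_null ?_ (measure_iUnion_null hall)
      intro ω hω
      simp only [Set.mem_setOf_eq] at hω
      obtain ⟨k, hk⟩ := exists_nat_one_div_lt (sub_pos.2 hω)
      refine Set.mem_iUnion.2 ⟨k, ?_⟩
      simp only [Set.mem_setOf_eq]
      rw [one_div] at hk
      linarith
    push_neg at h1
    obtain ⟨k, hk⟩ := h1
    refine ⟨x + ((k : ℝ) + 1)⁻¹, by
      have : (0:ℝ) < ((k : ℝ) + 1)⁻¹ := by positivity
      linarith, ?_⟩
    exact ENNReal.toReal_pos hk (measure_ne_top μ _)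
  obtain ⟨y, hxy, hpy⟩ := hexists_y
  set Λ : ℝ → ℝ := fun t => cgf (X 0) μ t with hΛ
  set L : EReal := liminf (fun n : ℕ =>
        (((n : ℝ)⁻¹ : ℝ) : EReal) *
          ENNReal.log (μ {ω | (n : ℝ) * x ≤ ∑ i ∈ Finset.range n, X i ω})) atTop with hLdef
  set Cb : ℝ := max 0 (-Real.log (μ {ω | y ≤ X 0 ω}).toReal) with hCb
  have helem : ∀ c : ℝ, μ[X 0] ≤ c → c ≤ y → ∀ t : ℝ, t * c - Λ t ≤ Cb := by
    intro c h1 h2 t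
    rcases le_or_gt 0 t with ht | ht
    · have h3 := aux_cgf_ge_tail (hmeas 0) hfin ht hpy
      have h4 : t * (c - y) ≤ 0 := mul_nonpos_of_nonneg_of_nonpos ht (by linarith)
      have h5 : -Real.log (μ {ω | y ≤ X 0 ω}).toReal ≤ Cb := le_max_right _ _
      have : t * c - Λ t ≤ -Real.log (μ {ω | y ≤ X 0 ω}).toReal := by
        simp only [hΛ]
        nlinarith
      linarith
    · have h3 := aux_cgf_ge_mean (hmeas 0) hfin t
      have h4 : t * (c - μ[X 0]) ≤ 0 :=
        mul_nonpos_of_nonpos_of_nonneg ht.le (by linarith)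
      have : t * c - Λ t ≤ 0 := by
        simp only [hΛ]
        nlinarith
      exact this.trans (le_max_left _ _)
  set J : ℝ → ℝ := fun c => sSup (Set.range fun t : ℝ => t * c - Λ t) with hJdef
  have hJle : ∀ c : ℝ, μ[X 0] ≤ c → c ≤ y → ∀ t : ℝ, t * c - Λ t ≤ J c := by
    intro c h1 h2 t
    exact le_csSup ⟨Cb, Set.forall_mem_range.2 (helem c h1 h2)⟩ (Set.mem_range_self t)
  set y₀ : ℝ := (x + y) / 2 with hy₀
  have hxy₀ : x < y₀ := by rw [hy₀]; linarith
  have hy₀y : y₀ < y := by rw [hy₀]; linarith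
  -- Step A
  have hStepA : ((J x : ℝ) : EReal) ≤ cramerRate (X 0) μ x := by
    refine aux_le_of_forall_sub fun ε hε => ?_
    have hne : (Set.range fun t : ℝ => t * x - Λ t).Nonempty := ⟨_, Set.mem_range_self 0⟩
    obtain ⟨v, hv_mem, hvlt⟩ := exists_lt_of_lt_csSup hne (sub_lt_self (J x) hε)
    obtain ⟨t, rfl⟩ := hv_mem
    calc ((J x - ε : ℝ) : EReal) ≤ ((t * x - Λ t : ℝ) : EReal) := by exact_mod_cast hvlt.le
      _ ≤ cramerRate (X 0) μ x := le_iSup (fun t : ℝ => ((t * x - cgf (X 0) μ t : ℝ) : EReal)) t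
  -- Step B
  have hStepB : ∀ ε : ℝ, 0 < ε → ((-(J x) - ε : ℝ) : EReal) ≤ L := by
    intro ε hε
    set D : ℝ := |J x| + |J y₀| + 1 with hD
    have hDpos : 0 < D := by positivity
    set s : ℝ := min (1/2) (ε / D) with hs
    have hspos : 0 < s := lt_min (by norm_num) (div_pos hε hDpos)
    have hsD : s * D ≤ ε := by
      have h1 : s ≤ ε / D := min_le_right _ _
      calc s * D ≤ (ε / D) * D := mul_le_mul_of_nonneg_right h1 hDpos.le
        _ = ε := by field_simp
    set x'' : ℝ := x + s * (y₀ - x) with hx''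
    have hxx'' : x < x'' := by
      rw [hx'']
      nlinarith
    have hx''y₀ : x'' ≤ y₀ := by
      rw [hx'']
      nlinarith [min_le_left (1/2 : ℝ) (ε / D)]
    obtain ⟨t, c, ht0, hxc, hcx'', hder⟩ :=
      aux_choose_t (hmeas 0) hfin hx hxx'' hxy hpy
    have hcy₀ : c ≤ y₀ := hcx''.trans hx''y₀
    -- t * c - Λ t ≤ J x + ε
    have hkey : t * c - Λ t ≤ J x + ε := by
      set θ : ℝ := (y₀ - c) / (y₀ - x) with hθ
      have hy₀x : 0 < y₀ - x := by linarith
      have hθ0 : 0 ≤ θ := div_nonneg (by linarith) hy₀x.le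
      have hθ1 : θ ≤ 1 := (div_le_one hy₀x).2 (by linarith)
      have hceq : c = θ * x + (1 - θ) * y₀ := by
        rw [hθ]
        field_simp
        ring
      have h1θ : 1 - θ ≤ s := by
        have e0 : 1 - θ = (c - x) / (y₀ - x) := by
          rw [hθ]; field_simp; ring
        have e0' : c - x ≤ s * (y₀ - x) := by
          have := hcx''
          rw [hx''] at this
          linarith
        rw [e0, div_le_iff₀ hy₀x]
        linarith
      have e1 : t * c - Λ t = θ * (t * x - Λ t) + (1 - θ) * (t * y₀ - Λ t) := by
        rw [hceq]; ring
      have e2 : t * x - Λ t ≤ J x := hJle x hx.le (by linarith) t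
      have e3 : t * y₀ - Λ t ≤ J y₀ := hJle y₀ (by linarith) hy₀y.le t
      have e4 : θ * (t * x - Λ t) ≤ θ * J x := mul_le_mul_of_nonneg_left e2 hθ0
      have e5 : (1 - θ) * (t * y₀ - Λ t) ≤ (1 - θ) * J y₀ :=
        mul_le_mul_of_nonneg_left e3 (by linarith)
      have e6 : θ * J x + (1 - θ) * J y₀ ≤ J x + ε := by
        have a1 : J x ≤ |J x| := le_abs_self _
        have a2 : -|J x| ≤ J x := neg_abs_le _
        have a3 : J y₀ ≤ |J y₀| := le_abs_self _
        have a4 : -|J y₀| ≤ J y₀ := neg_abs_le _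
        have a5 : (1 - θ) * D ≤ s * D := mul_le_mul_of_nonneg_right h1θ hDpos.le
        nlinarith
      linarith
    -- liminf bound
    have hlim : ((Λ t - t * c : ℝ) : EReal) ≤ L := by
      refine aux_le_of_forall_sub fun ε2 hε2 => ?_
      have htpos : 0 < t + 1 := by linarith
      set z : ℝ := c + ε2 / (t + 1) with hz
      have hcz : c < z := by
        rw [hz]
        have := div_pos hε2 htpos
        linarith
      have hcore := aux_liminf_core hmeas hindep hident hfin ht0 hxc hcz hder
      rw [← hLdef] at hcore
      refine le_trans ?_ hcore
      rw [EReal.coe_le_coe_iff]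
      have h7 : t * (ε2 / (t + 1)) ≤ ε2 := by
        rw [mul_div_assoc', div_le_iff₀ htpos]
        nlinarith
      have h8 : t * z = t * c + t * (ε2 / (t + 1)) := by rw [hz]; ring
      show Λ t - t * c - ε2 ≤ Λ t - t * z
      rw [h8]
      linarith [h7]
    have hstep : ((-(J x) - ε : ℝ) : EReal) ≤ ((Λ t - t * c : ℝ) : EReal) := by
      rw [EReal.coe_le_coe_iff]
      linarith [hkey]
    exact hstep.trans hlim
  have hfinal : ((-(J x) : ℝ) : EReal) ≤ L := aux_le_of_forall_sub hStepB
  calc -(cramerRate (X 0) μ x) ≤ -((J x : ℝ) : EReal) := EReal.neg_le_neg_iff.2 hStepA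
    _ = ((-(J x) : ℝ) : EReal) := by rw [EReal.coe_neg]
    _ ≤ L := hfinal
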